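/- Let N ≥ 1 and Q ≥ 1 be integers. Let M₁, …, M_Q : X → X be paracontractions with respect to ‖·‖_{2,2} with ⋂_{r=1}^Q fix(M_r) = C, and assume 𝒜 ∩ C ≠ ∅. Let W₁, …, W_Q be N×N doubly stochastic matrices with strictly positive diagonal entries such that the edge set {(i,j) | (W_Q ⬝ W_{Q−1} ⬝ ⋯ ⬝ W₁)_{ij} > 0} of the matrix product is strongly connected on Fin N. Let 𝑾_r denote the averaging map of W_r on X. Then the composed map x ↦ (M_Q ∘ 𝑾_Q ∘ ⋯ ∘ M₁ ∘ 𝑾₁)(x) : (i) is a paracontraction with respect to ‖·‖_{2,2}, and (ii) satisfies fix(M_Q ∘ 𝑾_Q ∘ ⋯ ∘ M₁ ∘ 𝑾₁) = 𝒜 ∩ C. -/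

import Mathlib

open scoped BigOperators

noncomputable section

/-- The stacked space `X = Fin N → EuclideanSpace ℝ (Fin N)` with the ℓ²-product norm. -/
abbrev XSp (N : ℕ) := PiLp 2 (fun _ : Fin N => EuclideanSpace ℝ (Fin N))

/-- The core of a TU coalitional game with value function `v`. -/
def core {N : ℕ} (v : Finset (Fin N) → ℝ) : Set (EuclideanSpace ℝ (Fin N)) :=
  {x | ∑ i, x i = v Finset.univ ∧
    ∀ S : Finset (Fin N), S.Nonempty → ∑ i ∈ S, x i ≥ v S}

/-- A matrix is doubly stochastic: nonnegative entries, rows and columns sum to 1. -/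
def DoublyStochastic {N : ℕ} (W : Matrix (Fin N) (Fin N) ℝ) : Prop :=
  (∀ i j, 0 ≤ W i j) ∧ (∀ i, ∑ j, W i j = 1) ∧ (∀ j, ∑ i, W i j = 1)

/-- The averaging map `(𝑾 x)_i = ∑ j, W i j • x j` (Kronecker product `W ⊗ I`). -/
def avgMap {N n : ℕ} (W : Matrix (Fin N) (Fin N) ℝ)
    (x : PiLp 2 fun _ : Fin N => EuclideanSpace ℝ (Fin n)) :
    PiLp 2 fun _ : Fin N => EuclideanSpace ℝ (Fin n) :=
  WithLp.toLp 2 (fun i => ∑ j, W i j • x j)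

/-- An edge set on `Fin N` is strongly connected. -/
def StronglyConnected {N : ℕ} (E : Set (Fin N × Fin N)) : Prop :=
  ∀ i j : Fin N, Relation.ReflTransGen (fun a b => (a, b) ∈ E) i j

/-- A map is nonexpansive (1-Lipschitz). -/
def Nonexpansive {E : Type*} [NormedAddCommGroup E] (T : E → E) : Prop :=
  ∀ x y, ‖T x - T y‖ ≤ ‖x - y‖

/-- A continuous map `M` is a paracontraction if `‖M x - y‖ < ‖x - y‖` whenever
`x` is not a fixed point of `M` and `y` is a fixed point of `M`. -/
def Paracontraction {E : Type*} [NormedAddCommGroup E] (M : E → E) : Prop :=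
  Continuous M ∧ ∀ x y, M x ≠ x → M y = y → ‖M x - y‖ < ‖x - y‖

/-! ### Auxiliary lemmas -/

lemma avgMap_energy {N n : ℕ} {W : Matrix (Fin N) (Fin N) ℝ} (hW : DoublyStochastic W)
    (z : PiLp 2 fun _ : Fin N => EuclideanSpace ℝ (Fin n)) :
    ∑ i, ∑ j, W i j * ‖z j - avgMap W z i‖ ^ 2 = ‖z‖ ^ 2 - ‖avgMap W z‖ ^ 2 := by
  obtain ⟨hpos, hrow, hcol⟩ := hW
  have key : ∀ i, ∑ j, W i j * ‖z j - avgMap W z i‖ ^ 2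
      = (∑ j, W i j * ‖z j‖ ^ 2) - ‖avgMap W z i‖ ^ 2 := by
    intro i
    set m : EuclideanSpace ℝ (Fin n) := avgMap W z i with hm
    have hm' : m = ∑ j, W i j • z j := rfl
    have hinner : ∑ j, W i j * (inner ℝ (z j) m : ℝ) = ‖m‖ ^ 2 := by
      have h1 : (inner ℝ (∑ j, W i j • z j) m : ℝ) = ∑ j, W i j * (inner ℝ (z j) m : ℝ) := by
        rw [sum_inner]
        exact Finset.sum_congr rfl fun j _ => real_inner_smul_left _ _ _
      rw [← h1, ← hm', real_inner_self_eq_norm_sq]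
    calc ∑ j, W i j * ‖z j - m‖ ^ 2
        = ∑ j, (W i j * ‖z j‖ ^ 2 - 2 * (W i j * (inner ℝ (z j) m : ℝ)) + W i j * ‖m‖ ^ 2) := by
          refine Finset.sum_congr rfl fun j _ => ?_
          rw [norm_sub_sq_real]; ring
      _ = (∑ j, W i j * ‖z j‖ ^ 2) - 2 * (∑ j, W i j * (inner ℝ (z j) m : ℝ))
            + (∑ j, W i j) * ‖m‖ ^ 2 := by
          rw [Finset.sum_add_distrib, Finset.sum_sub_distrib, ← Finset.mul_sum,
            ← Finset.sum_mul]
      _ = (∑ j, W i j * ‖z j‖ ^ 2) - ‖m‖ ^ 2 := by rw [hinner, hrow i]; ring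
  calc ∑ i, ∑ j, W i j * ‖z j - avgMap W z i‖ ^ 2
      = ∑ i, ((∑ j, W i j * ‖z j‖ ^ 2) - ‖avgMap W z i‖ ^ 2) :=
        Finset.sum_congr rfl fun i _ => key i
    _ = (∑ j, ‖z j‖ ^ 2) - ∑ i, ‖avgMap W z i‖ ^ 2 := by
        rw [Finset.sum_sub_distrib]
        congr 1
        rw [Finset.sum_comm]
        exact Finset.sum_congr rfl fun j _ => by rw [← Finset.sum_mul, hcol j, one_mul]
    _ = ‖z‖ ^ 2 - ‖avgMap W z‖ ^ 2 := by
        rw [PiLp.norm_sq_eq_of_L2, PiLp.norm_sq_eq_of_L2]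

lemma avgMap_norm_le {N n : ℕ} {W : Matrix (Fin N) (Fin N) ℝ} (hW : DoublyStochastic W)
    (z : PiLp 2 fun _ : Fin N => EuclideanSpace ℝ (Fin n)) :
    ‖avgMap W z‖ ≤ ‖z‖ := by
  have h := avgMap_energy hW z
  have hnn : 0 ≤ ∑ i, ∑ j, W i j * ‖z j - avgMap W z i‖ ^ 2 :=
    Finset.sum_nonneg fun i _ => Finset.sum_nonneg fun j _ =>
      mul_nonneg (hW.1 i j) (sq_nonneg _)
  have h2 : ‖avgMap W z‖ ^ 2 ≤ ‖z‖ ^ 2 := by linarith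
  exact (pow_le_pow_iff_left₀ (norm_nonneg _) (norm_nonneg _) two_ne_zero).1 h2

lemma avgMap_consensus_of_norm_eq {N n : ℕ} {W : Matrix (Fin N) (Fin N) ℝ}
    (hW : DoublyStochastic W) (z : PiLp 2 fun _ : Fin N => EuclideanSpace ℝ (Fin n))
    (h : ‖avgMap W z‖ = ‖z‖) {i j : Fin N} (hij : 0 < W i j) :
    z j = avgMap W z i := by
  have h0 : ∑ i, ∑ j, W i j * ‖z j - avgMap W z i‖ ^ 2 = 0 := by
    rw [avgMap_energy hW z, h]; ring
  have hnn : ∀ i ∈ Finset.univ, ∀ j ∈ (Finset.univ : Finset (Fin N)),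
      0 ≤ W i j * ‖z j - avgMap W z i‖ ^ 2 :=
    fun i _ j _ => mul_nonneg (hW.1 i j) (sq_nonneg _)
  have heach : W i j * ‖z j - avgMap W z i‖ ^ 2 = 0 := by
    have := (Finset.sum_eq_zero_iff_of_nonneg
      (fun i _ => Finset.sum_nonneg fun j _ => hnn i (Finset.mem_univ i) j (Finset.mem_univ j))).1
      h0 i (Finset.mem_univ i)
    exact (Finset.sum_eq_zero_iff_of_nonneg
      (fun j hj => hnn i (Finset.mem_univ i) j hj)).1 this j (Finset.mem_univ j)
  have h1 : ‖z j - avgMap W z i‖ ^ 2 = 0 := by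
    rcases mul_eq_zero.1 heach with h' | h'
    · exact absurd h' (ne_of_gt hij)
    · exact h'
  have h2 := pow_eq_zero_iff (n := 2) two_ne_zero |>.1 h1
  rw [norm_eq_zero] at h2
  exact sub_eq_zero.1 h2

lemma avgMap_sub {N n : ℕ} (W : Matrix (Fin N) (Fin N) ℝ)
    (x y : PiLp 2 fun _ : Fin N => EuclideanSpace ℝ (Fin n)) :
    avgMap W (x - y) = avgMap W x - avgMap W y := by
  refine PiLp.ext fun i => ?_
  simp only [avgMap, PiLp.toLp_apply, PiLp.sub_apply, smul_sub, Finset.sum_sub_distrib]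

lemma avgMap_one {N n : ℕ} (x : PiLp 2 fun _ : Fin N => EuclideanSpace ℝ (Fin n)) :
    avgMap (1 : Matrix (Fin N) (Fin N) ℝ) x = x := by
  refine PiLp.ext fun i => ?_
  simp [avgMap, Matrix.one_apply, ite_smul]

lemma avgMap_mul {N n : ℕ} (A B : Matrix (Fin N) (Fin N) ℝ)
    (x : PiLp 2 fun _ : Fin N => EuclideanSpace ℝ (Fin n)) :
    avgMap (A * B) x = avgMap A (avgMap B x) := by
  refine PiLp.ext fun i => ?_
  simp only [avgMap, PiLp.toLp_apply, Matrix.mul_apply, Finset.sum_smul, Finset.smul_sum, smul_smul]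
  exact Finset.sum_comm

lemma DS_one {N : ℕ} : DoublyStochastic (1 : Matrix (Fin N) (Fin N) ℝ) := by
  refine ⟨fun i j => ?_, fun i => ?_, fun j => ?_⟩
  · by_cases h : i = j <;> simp [Matrix.one_apply, h]
  · simp [Matrix.one_apply]
  · simp [Matrix.one_apply]

lemma DS_mul {N : ℕ} {A B : Matrix (Fin N) (Fin N) ℝ}
    (hA : DoublyStochastic A) (hB : DoublyStochastic B) : DoublyStochastic (A * B) := by
  obtain ⟨hA0, hAr, hAc⟩ := hA
  obtain ⟨hB0, hBr, hBc⟩ := hB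
  refine ⟨fun i j => ?_, fun i => ?_, fun j => ?_⟩
  · rw [Matrix.mul_apply]
    exact Finset.sum_nonneg fun k _ => mul_nonneg (hA0 i k) (hB0 k j)
  · simp only [Matrix.mul_apply]
    rw [Finset.sum_comm]
    calc ∑ k, ∑ j, A i k * B k j = ∑ k, A i k * ∑ j, B k j := by
          simp [Finset.mul_sum]
      _ = 1 := by simp only [hBr, mul_one]; exact hAr i
  · simp only [Matrix.mul_apply]
    calc ∑ i, ∑ k, A i k * B k j = ∑ k, (∑ i, A i k) * B k j := by
          rw [Finset.sum_comm]; simp [Finset.sum_mul]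
      _ = 1 := by simp only [hAc, one_mul]; exact hBc j

lemma DS_list_prod {N : ℕ} (L : List (Matrix (Fin N) (Fin N) ℝ))
    (h : ∀ A ∈ L, DoublyStochastic A) : DoublyStochastic L.prod := by
  induction L with
  | nil => exact DS_one
  | cons A L ih =>
      rw [List.prod_cons]
      exact DS_mul (h A (List.mem_cons_self))
        (ih fun B hB => h B (List.mem_cons_of_mem _ hB))

lemma avgMap_prod_fixed {N n : ℕ} (L : List (Matrix (Fin N) (Fin N) ℝ))
    (x : PiLp 2 fun _ : Fin N => EuclideanSpace ℝ (Fin n))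
    (h : ∀ A ∈ L, avgMap A x = x) : avgMap L.prod x = x := by
  induction L with
  | nil => exact avgMap_one x
  | cons A L ih =>
      rw [List.prod_cons, avgMap_mul, ih fun B hB => h B (List.mem_cons_of_mem _ hB)]
      exact h A (List.mem_cons_self)

/-- A map that fixes `y`, is nonexpansive towards `y`, and strictly contracts towards `y`
off its fixed points. -/
def GoodFor {E : Type*} [NormedAddCommGroup E] (y : E) (T : E → E) : Prop :=
  T y = y ∧ (∀ z, ‖T z - y‖ ≤ ‖z - y‖) ∧ ∀ z, T z ≠ z → ‖T z - y‖ < ‖z - y‖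

lemma GoodFor.id' {E : Type*} [NormedAddCommGroup E] (y : E) : GoodFor y id :=
  ⟨rfl, fun _ => le_rfl, fun _ h => absurd rfl h⟩

lemma GoodFor.comp {E : Type*} [NormedAddCommGroup E] {y : E} {f g : E → E}
    (hf : GoodFor y f) (hg : GoodFor y g) : GoodFor y (f ∘ g) := by
  refine ⟨by simp [Function.comp, hg.1, hf.1], fun z => (hf.2.1 _).trans (hg.2.1 z),
    fun z hz => ?_⟩
  by_cases hgz : g z = z
  · have h1 : f z ≠ z := by
      simpa [Function.comp, hgz] using hz
    have := hf.2.2 z h1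
    simpa [Function.comp, hgz] using this
  · exact lt_of_le_of_lt (hf.2.1 (g z)) (hg.2.2 z hgz)

lemma GoodFor.comp_fix {E : Type*} [NormedAddCommGroup E] {y : E} {f g : E → E}
    (hf : GoodFor y f) (hg : GoodFor y g) {x : E} (hx : (f ∘ g) x = x) :
    g x = x ∧ f x = x := by
  by_cases hgx : g x = x
  · refine ⟨hgx, ?_⟩
    have : f (g x) = x := hx
    rwa [hgx] at this
  · exfalso
    have h1 := hg.2.2 x hgx
    have h2 := hf.2.1 (g x)
    have h3 : f (g x) = x := hx
    rw [h3] at h2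
    linarith

lemma foldl_comp_shift {E : Type*} (L : List (E → E)) (g : E → E) :
    L.foldl (fun g f => f ∘ g) g = (L.foldl (fun g f => f ∘ g) id) ∘ g := by
  induction L generalizing g with
  | nil => simp
  | cons f L ih =>
      simp only [List.foldl_cons]
      rw [ih (f ∘ g), ih (f ∘ id), Function.comp_id, Function.comp_assoc]

lemma goodfor_foldl {E : Type*} [NormedAddCommGroup E] {y : E} (L : List (E → E))
    (h : ∀ T ∈ L, GoodFor y T) :
    GoodFor y (L.foldl (fun g f => f ∘ g) id) := by
  induction L with
  | nil => exact GoodFor.id' y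
  | cons f L ih =>
      rw [List.foldl_cons, foldl_comp_shift, Function.comp_id]
      exact GoodFor.comp (ih fun T hT => h T (List.mem_cons_of_mem _ hT))
        (h f (List.mem_cons_self))

lemma foldl_fixes {E : Type*} (L : List (E → E)) (x : E) (h : ∀ T ∈ L, T x = x) :
    L.foldl (fun g f => f ∘ g) id x = x := by
  induction L with
  | nil => rfl
  | cons f L ih =>
      rw [List.foldl_cons, foldl_comp_shift, Function.comp_id, Function.comp_apply,
        h f (List.mem_cons_self)]
      exact ih fun T hT => h T (List.mem_cons_of_mem _ hT)

lemma foldl_fix {E : Type*} [NormedAddCommGroup E] {y : E} (L : List (E → E))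
    (h : ∀ T ∈ L, GoodFor y T) {x : E}
    (hx : L.foldl (fun g f => f ∘ g) id x = x) : ∀ T ∈ L, T x = x := by
  induction L with
  | nil => intro T hT; simp at hT
  | cons f L ih =>
      rw [List.foldl_cons, foldl_comp_shift, Function.comp_id] at hx
      obtain ⟨hfx, hGx⟩ := GoodFor.comp_fix
        (goodfor_foldl L fun T hT => h T (List.mem_cons_of_mem _ hT))
        (h f (List.mem_cons_self)) hx
      intro T hT
      rcases List.mem_cons.1 hT with rfl | hT'
      · exact hfx
      · exact ih (fun T hT => h T (List.mem_cons_of_mem _ hT)) hGx T hT'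

lemma continuous_foldl_comp {E : Type*} [TopologicalSpace E] (L : List (E → E))
    (h : ∀ T ∈ L, Continuous T) : Continuous (L.foldl (fun g f => f ∘ g) id) := by
  induction L with
  | nil => exact continuous_id
  | cons f L ih =>
      rw [List.foldl_cons, foldl_comp_shift, Function.comp_id]
      exact (ih fun T hT => h T (List.mem_cons_of_mem _ hT)).comp
        (h f (List.mem_cons_self))

lemma avgMap_continuous {N n : ℕ} (W : Matrix (Fin N) (Fin N) ℝ) :
    Continuous (avgMap (n := n) W) := by
  let L : (PiLp 2 fun _ : Fin N => EuclideanSpace ℝ (Fin n)) →ₗ[ℝ]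
      (PiLp 2 fun _ : Fin N => EuclideanSpace ℝ (Fin n)) :=
    { toFun := avgMap W
      map_add' := fun x y => by
        refine PiLp.ext fun i => ?_
        simp [avgMap, PiLp.add_apply, smul_add, Finset.sum_add_distrib]
      map_smul' := fun c x => by
        refine PiLp.ext fun i => ?_
        simp [avgMap, PiLp.smul_apply, Finset.smul_sum, smul_comm c] }
  exact (PiLp.continuous_toLp 2 _).comp (continuous_pi fun i => continuous_finset_sum _
    fun j _ => ((continuous_apply j).comp (PiLp.continuous_ofLp 2 _)).const_smul (W i j))

/-- Lemma 7: the composition `M_Q ∘ 𝑾_Q ∘ ⋯ ∘ M₁ ∘ 𝑾₁` is a paracontraction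
w.r.t. `‖·‖_{2,2}` and its fixed-point set is `𝒜 ∩ C`. -/
theorem composed_bargaining_map_paracontraction
    (N Q : ℕ) (hN : 1 ≤ N) (hQ : 1 ≤ Q)
    (M : Fin Q → (XSp N → XSp N)) (hM : ∀ r, Paracontraction (M r))
    (C : Set (XSp N)) (hC : (⋂ r, Function.fixedPoints (M r)) = C)
    (𝒜 : Set (XSp N)) (h𝒜 : 𝒜 = {x : XSp N | ∀ i j, x i = x j})
    (hne : (𝒜 ∩ C).Nonempty)
    (W : Fin Q → Matrix (Fin N) (Fin N) ℝ)
    (hW : ∀ r, DoublyStochastic (W r) ∧ ∀ i, 0 < W r i i)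
    (hconn : StronglyConnected {p : Fin N × Fin N |
      0 < ((List.ofFn fun r : Fin Q => W (Fin.rev r)).prod) p.1 p.2})
    (F : XSp N → XSp N)
    (hF : F = (List.ofFn fun r : Fin Q => (M r) ∘ avgMap (W r)).foldl
      (fun g f => f ∘ g) id) :
    Paracontraction F ∧ Function.fixedPoints F = 𝒜 ∩ C := by
  obtain ⟨y₀, hy₀⟩ := hne
  subst hC h𝒜 hF
  set L : List (XSp N → XSp N) := List.ofFn fun r : Fin Q => (M r) ∘ avgMap (W r) with hL
  have hWds : ∀ r, DoublyStochastic (W r) := fun r => (hW r).1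
  -- consensus points are fixed by averaging maps
  have hconsfix : ∀ (y : XSp N), (∀ i j, y i = y j) →
      ∀ (W' : Matrix (Fin N) (Fin N) ℝ), DoublyStochastic W' → avgMap W' y = y := by
    intro y hy W' hW'
    refine PiLp.ext fun i => ?_
    show ∑ j, W' i j • y j = y i
    calc ∑ j, W' i j • y j = ∑ j, W' i j • y i :=
        Finset.sum_congr rfl fun j _ => by rw [hy j i]
      _ = (∑ j, W' i j) • y i := (Finset.sum_smul).symm
      _ = y i := by rw [hW'.2.1 i, one_smul]
  have good_avg : ∀ (y : XSp N), (∀ i j, y i = y j) → ∀ r, GoodFor y (avgMap (W r)) := by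
    intro y hy r
    have hfixy : avgMap (W r) y = y := hconsfix y hy (W r) (hWds r)
    have hkey : ∀ z : XSp N, avgMap (W r) z - y = avgMap (W r) (z - y) := by
      intro z; rw [avgMap_sub, hfixy]
    have hle : ∀ z, ‖avgMap (W r) z - y‖ ≤ ‖z - y‖ := by
      intro z
      rw [hkey z]
      exact avgMap_norm_le (hWds r) (z - y)
    refine ⟨hfixy, hle, fun z hz => ?_⟩
    rcases (hle z).lt_or_eq with h | h
    · exact h
    · exfalso; apply hz
      have hnorm : ‖avgMap (W r) (z - y)‖ = ‖z - y‖ := by rw [← hkey z]; exact h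
      have hu : avgMap (W r) (z - y) = z - y := by
        refine PiLp.ext fun i => ?_
        exact (avgMap_consensus_of_norm_eq (hWds r) (z - y) hnorm ((hW r).2 i)).symm
      have h2 := hu
      rw [← hkey z] at h2
      exact sub_left_inj.1 h2
  have good_M : ∀ (y : XSp N), y ∈ (⋂ r, Function.fixedPoints (M r)) →
      ∀ r, GoodFor y (M r) := by
    intro y hy r
    have hfixy : M r y = y := Set.mem_iInter.1 hy r
    refine ⟨hfixy, fun z => ?_, fun z hz => (hM r).2 z y hz hfixy⟩
    by_cases h : M r z = z
    · rw [h]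
    · exact ((hM r).2 z y h hfixy).le
  have good_stage : ∀ (y : XSp N),
      y ∈ ({x : XSp N | ∀ i j, x i = x j} ∩ ⋂ r, Function.fixedPoints (M r)) →
      ∀ T ∈ L, GoodFor y T := by
    intro y hy T hT
    obtain ⟨r, rfl⟩ := List.mem_ofFn.1 hT
    exact GoodFor.comp (good_M y hy.2 r) (good_avg y hy.1 r)
  have hfix_eq : Function.fixedPoints (L.foldl (fun g f => f ∘ g) id)
      = {x : XSp N | ∀ i j, x i = x j} ∩ ⋂ r, Function.fixedPoints (M r) := by
    ext x
    constructor
    · intro hx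
      have hx' : L.foldl (fun g f => f ∘ g) id x = x := hx
      have hstages := foldl_fix L (good_stage y₀ hy₀) hx'
      have hparts : ∀ r, avgMap (W r) x = x ∧ M r x = x := by
        intro r
        have hmem : (M r ∘ avgMap (W r)) ∈ L := List.mem_ofFn.2 ⟨r, rfl⟩
        exact GoodFor.comp_fix (good_M y₀ hy₀.2 r) (good_avg y₀ hy₀.1 r)
          (hstages _ hmem)
      constructor
      · intro i j
        have hPds : DoublyStochastic (List.ofFn fun r : Fin Q => W (Fin.rev r)).prod :=
          DS_list_prod _ (fun A hA => by
            obtain ⟨r, rfl⟩ := List.mem_ofFn.1 hA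
            exact hWds _)
        have hPx : avgMap (List.ofFn fun r : Fin Q => W (Fin.rev r)).prod x = x :=
          avgMap_prod_fixed _ x fun A hA => by
            obtain ⟨r, rfl⟩ := List.mem_ofFn.1 hA
            exact (hparts _).1
        have hnorm : ‖avgMap (List.ofFn fun r : Fin Q => W (Fin.rev r)).prod x‖ = ‖x‖ := by
          rw [hPx]
        have hedge : ∀ a b : Fin N,
            0 < (List.ofFn fun r : Fin Q => W (Fin.rev r)).prod a b → x a = x b := by
          intro a b hab
          have := avgMap_consensus_of_norm_eq hPds x hnorm hab
          rw [hPx] at this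
          exact this.symm
        have hpath := hconn i j
        induction hpath with
        | refl => rfl
        | tail hab hbc ih => exact ih.trans (hedge _ _ hbc)
      · exact Set.mem_iInter.2 fun r => (hparts r).2
    · intro hx
      show L.foldl (fun g f => f ∘ g) id x = x
      apply foldl_fixes
      intro T hT
      obtain ⟨r, rfl⟩ := List.mem_ofFn.1 hT
      have h1 : avgMap (W r) x = x := hconsfix x hx.1 (W r) (hWds r)
      have h2 : M r x = x := Set.mem_iInter.1 hx.2 r
      show M r (avgMap (W r) x) = x
      rw [h1, h2]
  refine ⟨⟨?_, ?_⟩, hfix_eq⟩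
  · apply continuous_foldl_comp
    intro T hT
    obtain ⟨r, rfl⟩ := List.mem_ofFn.1 hT
    exact ((hM r).1).comp (avgMap_continuous (W r))
  · intro x y hx hy
    have hyC : y ∈ ({x : XSp N | ∀ i j, x i = x j} ∩ ⋂ r, Function.fixedPoints (M r)) := by
      rw [← hfix_eq]; exact hy
    exact (goodfor_foldl L (good_stage y hyC)).2.2 x hx
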